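/- Let F be an additively idempotent semifield with canonical order a ≤ b iff a + b = b, and let a, b be nonzero elements of F. Then m := (a⁻¹ + b⁻¹)⁻¹ is the greatest lower bound of a and b: m + a = a, m + b = b, and for every c ∈ F with c + a = a and c + b = b one has c + m = m. Hence the nonzero elements of F form a lattice-ordered abelian group under multiplication, with join a + b and meet (a⁻¹ + b⁻¹)⁻¹. -/
import Mathlib


/-- In an additively idempotent semifield with canonical order `a ≤ b ↔ a + b = b`,
for nonzero `a, b` the element `m = (a⁻¹ + b⁻¹)⁻¹` is the greatest lower bound of
`a` and `b`: the nonzero elements form an abelian ℓ-group under multiplication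
with join `a + b` and meet `(a⁻¹ + b⁻¹)⁻¹`. -/
theorem stmt_8 {F : Type*} [Semifield F] (hidem : ∀ a : F, a + a = a)
    (a b : F) (ha : a ≠ 0) (hb : b ≠ 0) :
    (a⁻¹ + b⁻¹)⁻¹ + a = a ∧ (a⁻¹ + b⁻¹)⁻¹ + b = b ∧
    ∀ c : F, c + a = a → c + b = b → c + (a⁻¹ + b⁻¹)⁻¹ = (a⁻¹ + b⁻¹)⁻¹ := by
  have ha' : a⁻¹ ≠ 0 := inv_ne_zero ha
  have hb' : b⁻¹ ≠ 0 := inv_ne_zero hb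
  have hs : a⁻¹ + b⁻¹ ≠ 0 := by
    intro h
    apply ha'
    calc a⁻¹ = a⁻¹ + 0 := by rw [add_zero]
      _ = a⁻¹ + (a⁻¹ + b⁻¹) := by rw [h]
      _ = (a⁻¹ + a⁻¹) + b⁻¹ := by rw [add_assoc]
      _ = a⁻¹ + b⁻¹ := by rw [hidem]
      _ = 0 := h
  set s := a⁻¹ + b⁻¹ with hsdef
  have key : ∀ x y : F, x * s = y * s → x = y := fun x y h => mul_right_cancel₀ hs h
  have hms : s⁻¹ * s = 1 := inv_mul_cancel₀ hs
  have has : a * s = 1 + a * b⁻¹ := by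
    rw [hsdef, mul_add, mul_inv_cancel₀ ha]
  have hbs : b * s = b * a⁻¹ + 1 := by
    rw [hsdef, mul_add, mul_inv_cancel₀ hb]
  have h1 : s⁻¹ + a = a := by
    apply key
    rw [add_mul, hms, has, ← add_assoc, hidem]
  have h2 : s⁻¹ + b = b := by
    apply key
    rw [add_mul, hms, hbs, ← add_comm, add_assoc, hidem, add_comm]
  refine ⟨h1, h2, fun c hca hcb => ?_⟩
  have hca' : c * a⁻¹ + 1 = 1 := by
    have := congrArg (· * a⁻¹) hca
    simpa [add_mul, mul_inv_cancel₀ ha] using this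
  have hcb' : c * b⁻¹ + 1 = 1 := by
    have := congrArg (· * b⁻¹) hcb
    simpa [add_mul, mul_inv_cancel₀ hb] using this
  apply key
  rw [add_mul, hms]
  calc c * s + 1 = c * a⁻¹ + (c * b⁻¹ + 1) := by rw [hsdef, mul_add, add_assoc]
    _ = c * a⁻¹ + 1 := by rw [hcb']
    _ = 1 := hca'
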